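/- arXiv:2009.14193 — 3 statements merged into one kernel-verified Lean document; each statement's English description precedes it below -/
import Mathlib

section
/- In the RAPS setting with λ = 1 and any k_reg ≤ k*, where k* is the smallest k such that the top-k prediction sets cover at least ⌈(n+1)(1−α)⌉ of the n calibration points, the calibrated threshold satisfies τ̂ ≤ 1 + k* − k_reg, and consequently the RAPS prediction set on any new point is contained in the top-k* set: C*(X_{n+1}, U_{n+1}, τ̂) ⊆ {ŷ_(1)(X_{n+1}), ..., ŷ_(k*)(X_{n+1})}. -/
open MeasureTheory

/-- The `k`-th smallest element of a list of reals (`k ≥ 1`). -/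
noncomputable def kthSmallest (l : List ℝ) (k : ℕ) : ℝ :=
  ((l : Multiset ℝ).sort (· ≤ ·)).getD (k - 1) 0

/-- Total estimated probability mass of labels strictly more likely than `y` at `x`. -/
noncomputable def probMassAbove {d K : ℕ} (π : (Fin d → ℝ) → Fin K → ℝ)
    (x : Fin d → ℝ) (y : Fin K) : ℝ :=
  ∑ y' : Fin K, if π x y < π x y' then π x y' else 0

/-- The rank of label `y` at `x`: the number of labels at least as likely as `y`. -/
noncomputable def labelRank {d K : ℕ} (π : (Fin d → ℝ) → Fin K → ℝ)
    (x : Fin d → ℝ) (y : Fin K) : ℕ :=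
  ({y' : Fin K | π x y ≤ π x y'} : Set (Fin K)).ncard

/-- The RAPS conformal score `s(x,u,y) = ρ_x(y) + π̂_x(y)·u + λ·(o_x(y) - k_reg)⁺`. -/
noncomputable def rapsScore {d K : ℕ} (π : (Fin d → ℝ) → Fin K → ℝ) (lam kreg : ℝ)
    (x : Fin d → ℝ) (u : ℝ) (y : Fin K) : ℝ :=
  probMassAbove π x y + π x y * u + lam * max ((labelRank π x y : ℝ) - kreg) 0

lemma sorted_kth_le {s : List ℝ} (hs : s.Pairwise (· ≤ ·)) {m : ℕ} (hm : 1 ≤ m)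
    (hlen : m ≤ s.length) {B : ℝ} (hc : m ≤ s.countP (fun a => decide (a ≤ B))) :
    s.getD (m - 1) 0 ≤ B := by
  by_contra h
  push_neg at h
  have hidx : m - 1 < s.length := by omega
  rw [List.getD_eq_getElem?_getD, List.getElem?_eq_getElem hidx] at h
  have hdrop : (s.drop (m-1)).countP (fun a => decide (a ≤ B)) = 0 := by
    rw [List.countP_eq_zero]
    intro a ha
    obtain ⟨j, hj, rfl⟩ := List.getElem_of_mem ha
    rw [List.getElem_drop]
    simp only [decide_eq_true_eq, not_le]
    refine lt_of_lt_of_le h ?_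
    have := hs.rel_get_of_le (a := ⟨m-1, hidx⟩) (b := ⟨m-1+j, by
      have := hj; rw [List.length_drop] at this; omega⟩) (by simp)
    simpa using this
  have hsplit : s.countP (fun a => decide (a ≤ B)) ≤ m - 1 := by
    conv_lhs => rw [← List.take_append_drop (m-1) s]
    rw [List.countP_append, hdrop]
    have := List.countP_le_length (l := s.take (m-1)) (p := fun a => decide (a ≤ B))
    rw [List.length_take] at this
    omega
  omega

lemma ncard_le_countP_ofFn {n : ℕ} (f : Fin n → ℝ) (B : ℝ) (S : Set (Fin n))
    (hS : ∀ i ∈ S, f i ≤ B) :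
    S.ncard ≤ (List.ofFn f).countP (fun a => decide (a ≤ B)) := by
  classical
  have h1 : S.ncard ≤ (Finset.univ.filter (fun i => f i ≤ B)).card := by
    apply le_trans (Set.ncard_le_ncard (t := {i | f i ≤ B}) hS (Set.toFinite _))
    rw [← Set.ncard_coe_finset]
    apply le_of_eq
    congr 1
    ext i
    simp
  refine h1.trans (le_of_eq ?_)
  rw [List.ofFn_eq_map, List.countP_map]
  rw [List.countP_eq_length_filter]
  rw [← List.toFinset_card_of_nodup ((List.nodup_finRange n).filter _)]
  congr 1
  ext i
  simp [List.mem_filter, List.mem_finRange]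

/-- `kthSmallest` of a list of `n` values is at most `B` if at least `m` values are `≤ B`. -/
lemma kthSmallest_le {n : ℕ} (f : Fin n → ℝ) {m : ℕ} (hm : 1 ≤ m) (hn : m ≤ n) {B : ℝ}
    (S : Set (Fin n)) (hS : ∀ i ∈ S, f i ≤ B) (hcard : m ≤ S.ncard) :
    kthSmallest (List.ofFn f) m ≤ B := by
  apply sorted_kth_le (Multiset.pairwise_sort _ _) hm
  · rw [Multiset.length_sort]
    simpa using hn
  · have hcount : ((Multiset.sort ↑(List.ofFn f) (· ≤ ·)) : List ℝ).countP
        (fun a => decide (a ≤ B)) = (List.ofFn f).countP (fun a => decide (a ≤ B)) := by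
      rw [← Multiset.coe_countP, Multiset.sort_eq, Multiset.coe_countP]
    rw [hcount]
    exact le_trans (le_trans hcard (ncard_le_countP_ofFn f B S hS)) (le_refl _)

/-- `ρ_x(y) + π̂_x(y) ≤ 1`. -/
lemma probMassAbove_add_le {d K : ℕ} (π : (Fin d → ℝ) → Fin K → ℝ)
    (hpos : ∀ x y, 0 < π x y) (hsum : ∀ x, ∑ y : Fin K, π x y = 1)
    (x : Fin d → ℝ) (y : Fin K) : probMassAbove π x y + π x y ≤ 1 := by
  classical
  rw [← hsum x]
  have key : probMassAbove π x y + π x y =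
      ∑ y' : Fin K, ((if π x y < π x y' then π x y' else 0)
        + if y' = y then π x y else 0) := by
    rw [Finset.sum_add_distrib, Finset.sum_ite_eq' Finset.univ y (fun _ => π x y)]
    simp [probMassAbove]
  rw [key]
  apply Finset.sum_le_sum
  intro y'' _
  by_cases h : y'' = y
  · subst h; simp [lt_irrefl]
  · rw [if_neg h, add_zero]
    split_ifs with h2
    · exact le_refl _
    · exact (hpos x y'').le

/-- The rank is at least 1. -/
lemma one_le_labelRank {d K : ℕ} (π : (Fin d → ℝ) → Fin K → ℝ)
    (x : Fin d → ℝ) (y : Fin K) : 1 ≤ labelRank π x y := by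
  unfold labelRank
  exact (Set.ncard_pos (Set.toFinite _)).mpr ⟨y, by simp⟩

/-- If the rank is at least 2, there is a strictly more likely label, so `ρ > 0`. -/
lemma probMassAbove_pos {d K : ℕ} (π : (Fin d → ℝ) → Fin K → ℝ)
    (hpos : ∀ x y, 0 < π x y) (hdistinct : ∀ x, Function.Injective (π x))
    (x : Fin d → ℝ) (y : Fin K) (h2 : 2 ≤ labelRank π x y) :
    0 < probMassAbove π x y := by
  classical
  unfold labelRank at h2
  obtain ⟨b, hb, hby⟩ := Set.exists_ne_of_one_lt_ncard (by omega :
    1 < ({y' : Fin K | π x y ≤ π x y'} : Set (Fin K)).ncard) y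
  have hlt : π x y < π x b := lt_of_le_of_ne hb (fun h => hby (hdistinct x h).symm)
  have : probMassAbove π x y = ∑ y' : Fin K, if π x y < π x y' then π x y' else 0 := rfl
  rw [this]
  have hterm : (if π x y < π x b then π x b else 0) = π x b := if_pos hlt
  calc (0:ℝ) < π x b := hpos x b
    _ = if π x y < π x b then π x b else 0 := hterm.symm
    _ ≤ ∑ y' : Fin K, if π x y < π x y' then π x y' else 0 := by
        apply Finset.single_le_sum (f := fun y' => if π x y < π x y' then π x y' else 0)
          (fun i _ => by split_ifs; exacts [(hpos x i).le, le_refl 0]) (Finset.mem_univ b)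

/-- **RAPS with `λ = 1` dominates the top-`k*` sets.**  If `k*` is the smallest `k` such that
the top-`k` sets cover at least `⌈(n+1)(1-α)⌉` of the `n` calibration points, `k_reg ≤ k*`,
and `τ̂` is the `⌈(1-α)(n+1)⌉`-th smallest calibration score, then `τ̂ ≤ 1 + k* - k_reg`, and
the RAPS prediction set at any new point is contained in the top-`k*` set (i.e. every label
it contains has rank at most `k*`). -/
theorem raps_dominates_topk
    (d K n : ℕ) (α : ℝ) (hα : α ∈ Set.Ioo (0 : ℝ) 1)
    (π : (Fin d → ℝ) → Fin K → ℝ)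
    (hpos : ∀ x y, 0 < π x y)
    (hsum : ∀ x, ∑ y : Fin K, π x y = 1)
    (hdistinct : ∀ x, Function.Injective (π x))
    -- the calibration data
    (x : Fin n → (Fin d → ℝ)) (u : Fin n → ℝ) (y : Fin n → Fin K)
    (hu : ∀ i, u i ∈ Set.Icc (0 : ℝ) 1)
    -- the generalized quantile index is at most n
    (hk : (⌈(1 - α) * ((n : ℝ) + 1)⌉ : ℤ).toNat ≤ n)
    -- k* is the smallest k such that the top-k sets cover ⌈(n+1)(1-α)⌉ calibration points
    (kstar : ℕ)
    (hkstar_cov : (⌈((n : ℝ) + 1) * (1 - α)⌉ : ℤ).toNat ≤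
      ({i : Fin n | labelRank π (x i) (y i) ≤ kstar} : Set (Fin n)).ncard)
    (hkstar_min : ∀ k : ℕ, k < kstar →
      ({i : Fin n | labelRank π (x i) (y i) ≤ k} : Set (Fin n)).ncard <
        (⌈((n : ℝ) + 1) * (1 - α)⌉ : ℤ).toNat)
    -- the regularization parameters: λ = 1 and 0 ≤ k_reg ≤ k*
    (kreg : ℝ) (hkreg0 : 0 ≤ kreg) (hkreg : kreg ≤ (kstar : ℝ)) :
    kthSmallest (List.ofFn fun i : Fin n => rapsScore π 1 kreg (x i) (u i) (y i))
        (⌈(1 - α) * ((n : ℝ) + 1)⌉ : ℤ).toNat ≤ 1 + (kstar : ℝ) - kreg ∧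
    ∀ (x' : Fin d → ℝ) (u' : ℝ), u' ∈ Set.Icc (0 : ℝ) 1 → ∀ y' : Fin K,
      rapsScore π 1 kreg x' u' y' ≤
        kthSmallest (List.ofFn fun i : Fin n => rapsScore π 1 kreg (x i) (u i) (y i))
          (⌈(1 - α) * ((n : ℝ) + 1)⌉ : ℤ).toNat →
      labelRank π x' y' ≤ kstar := by
  obtain ⟨hα0, hα1⟩ := hα
  set m : ℕ := (⌈(1 - α) * ((n : ℝ) + 1)⌉ : ℤ).toNat with hm_def
  have hcomm : (⌈((n : ℝ) + 1) * (1 - α)⌉ : ℤ).toNat = m := by rw [mul_comm]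
  have hm1 : 1 ≤ m := by
    have hpos' : (0:ℝ) < (1 - α) * ((n : ℝ) + 1) := by
      apply mul_pos (by linarith) (by positivity)
    have : (1:ℤ) ≤ ⌈(1 - α) * ((n : ℝ) + 1)⌉ := by
      exact_mod_cast Int.ceil_pos.mpr hpos'
    omega
  -- the score bound on any point with rank ≤ kstar
  have hscore_le : ∀ (x0 : Fin d → ℝ) (u0 : ℝ), 0 ≤ u0 → u0 ≤ 1 → ∀ y0 : Fin K,
      labelRank π x0 y0 ≤ kstar →
      rapsScore π 1 kreg x0 u0 y0 ≤ 1 + (kstar : ℝ) - kreg := by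
    intro x0 u0 hu0 hu1 y0 hrank
    have h1 : probMassAbove π x0 y0 + π x0 y0 * u0 ≤ 1 := by
      have := probMassAbove_add_le π hpos hsum x0 y0
      have h2 : π x0 y0 * u0 ≤ π x0 y0 := mul_le_of_le_one_right (hpos x0 y0).le hu1
      linarith
    have h3 : max ((labelRank π x0 y0 : ℝ) - kreg) 0 ≤ (kstar : ℝ) - kreg := by
      apply max_le _ (by linarith)
      have : (labelRank π x0 y0 : ℝ) ≤ (kstar : ℝ) := by exact_mod_cast hrank
      linarith
    simp only [rapsScore, one_mul]
    linarith
  -- part 1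
  have part1 : kthSmallest (List.ofFn fun i : Fin n => rapsScore π 1 kreg (x i) (u i) (y i))
      m ≤ 1 + (kstar : ℝ) - kreg := by
    apply kthSmallest_le _ hm1 hk
      (S := ({i : Fin n | labelRank π (x i) (y i) ≤ kstar} : Set (Fin n)))
    · intro i hi
      exact hscore_le (x i) (u i) (hu i).1 (hu i).2 (y i) hi
    · rw [← hcomm]; exact hkstar_cov
  refine ⟨part1, ?_⟩
  -- part 2
  intro x' u' hu' y' hsc
  by_contra hrank
  push_neg at hrank
  -- kstar ≥ 1
  have hkstar1 : 1 ≤ kstar := by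
    by_contra hk0
    push_neg at hk0
    interval_cases kstar
    have hempty : ({i : Fin n | labelRank π (x i) (y i) ≤ 0} : Set (Fin n)) = ∅ := by
      ext i
      simp only [Set.mem_setOf_eq, Set.mem_empty_iff_false, iff_false]
      have := one_le_labelRank π (x i) (y i)
      omega
    rw [hempty, Set.ncard_empty, hcomm] at hkstar_cov
    omega
  have hrank2 : 2 ≤ labelRank π x' y' := by omega
  have hρ : 0 < probMassAbove π x' y' := probMassAbove_pos π hpos hdistinct x' y' hrank2
  have hmax : max ((labelRank π x' y' : ℝ) - kreg) 0 = (labelRank π x' y' : ℝ) - kreg := by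
    apply max_eq_left
    have : (kstar : ℝ) + 1 ≤ (labelRank π x' y' : ℝ) := by exact_mod_cast hrank
    linarith
  have hbig : 1 + (kstar : ℝ) - kreg < rapsScore π 1 kreg x' u' y' := by
    simp only [rapsScore, one_mul, hmax]
    have hπu : 0 ≤ π x' y' * u' := mul_nonneg (hpos x' y').le hu'.1
    have : (kstar : ℝ) + 1 ≤ (labelRank π x' y' : ℝ) := by exact_mod_cast hrank
    linarith
  linarith [le_trans hsc part1]
end

section
/- Let (X, Y) be a pair where Y takes values in a finite set, let π̂_x be estimated class probabilities with distinct values for each x, let ρ_x(y) be the total mass of classes strictly more likely than y, and let U be uniform on [0,1] independent of (X,Y). If π̂_x(y) equals the true conditional probability P(Y = y | X = x) for all x, y, then the random variable V = ρ_X(Y) + π̂_X(Y)·U is uniformly distributed on [0,1] conditionally on X, and hence unconditionally. -/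
open MeasureTheory ProbabilityTheory
open scoped ENNReal
open Finset

lemma aux_sum {K : ℕ} (p : Fin K → ℝ) (t : ℝ) (ht : 0 ≤ t) (s : Finset (Fin K)) :
    (∀ y ∈ s, 0 ≤ p y) → Set.InjOn p s →
    ∑ y ∈ s, (min t ((∑ y' ∈ s, if p y < p y' then p y' else 0) + p y)
      - min t (∑ y' ∈ s, if p y < p y' then p y' else 0)) = min t (∑ y ∈ s, p y) := by
  induction s using Finset.strongInduction with
  | _ s ih =>
    intro hnn hinj
    rcases s.eq_empty_or_nonempty with rfl | hs
    · simp [min_eq_right ht]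
    obtain ⟨y₀, hy₀s, hy₀min⟩ := s.exists_min_image p hs
    have hsub : s.erase y₀ ⊂ s := Finset.erase_ssubset hy₀s
    have hρ : ∀ y ∈ s.erase y₀,
        (∑ y' ∈ s, if p y < p y' then p y' else 0)
          = ∑ y' ∈ s.erase y₀, if p y < p y' then p y' else 0 := by
      intro y hy
      rw [← Finset.add_sum_erase s _ hy₀s]
      have : ¬ p y < p y₀ := not_lt.2 (hy₀min y (Finset.mem_of_mem_erase hy))
      simp [this]
    have hρ₀ : (∑ y' ∈ s, if p y₀ < p y' then p y' else 0) = ∑ y' ∈ s.erase y₀, p y' := by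
      rw [← Finset.add_sum_erase s _ hy₀s, if_neg (lt_irrefl _), zero_add]
      apply Finset.sum_congr rfl
      intro y' hy'
      have h1 : p y₀ ≤ p y' := hy₀min y' (Finset.mem_of_mem_erase hy')
      have h2 : p y₀ ≠ p y' := fun h =>
        (Finset.ne_of_mem_erase hy').symm (hinj hy₀s (Finset.mem_of_mem_erase hy') h)
      rw [if_pos (lt_of_le_of_ne h1 h2)]
    rw [← Finset.add_sum_erase s _ hy₀s]
    have hrec := ih (s.erase y₀) hsub (fun y hy => hnn y (Finset.mem_of_mem_erase hy))
      (hinj.mono (fun y hy => Finset.mem_of_mem_erase hy))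
    calc (min t ((∑ y' ∈ s, if p y₀ < p y' then p y' else 0) + p y₀)
          - min t (∑ y' ∈ s, if p y₀ < p y' then p y' else 0))
        + ∑ y ∈ s.erase y₀, (min t ((∑ y' ∈ s, if p y < p y' then p y' else 0) + p y)
          - min t (∑ y' ∈ s, if p y < p y' then p y' else 0))
        = (min t (∑ y ∈ s, p y) - min t (∑ y' ∈ s.erase y₀, p y'))
          + ∑ y ∈ s.erase y₀, (min t ((∑ y' ∈ s.erase y₀, if p y < p y' then p y' else 0) + p y)
          - min t (∑ y' ∈ s.erase y₀, if p y < p y' then p y' else 0)) := by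
          rw [hρ₀, ← Finset.add_sum_erase s p hy₀s]
          congr 1
          · ring_nf
          · exact Finset.sum_congr rfl (fun y hy => by rw [hρ y hy])
      _ = min t (∑ y ∈ s, p y) := by rw [hrec]; ring

lemma uniform_term (a b t : ℝ) (hb : 0 ≤ b) :
    b * ((volume.restrict (Set.Icc (0:ℝ) 1)) {u | a + b * u ≤ t}).toReal
      = min t (a + b) - min t a := by
  rcases eq_or_lt_of_le hb with rfl | hb'
  · simp
  have hmeas : MeasurableSet {u : ℝ | a + b * u ≤ t} := by
    have : {u : ℝ | a + b * u ≤ t} = Set.Iic ((t - a) / b) := by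
      ext u; simp only [Set.mem_setOf_eq, Set.mem_Iic, le_div_iff₀ hb']
      constructor <;> intro h <;> linarith
    rw [this]; exact measurableSet_Iic
  have hset : {u : ℝ | a + b * u ≤ t} ∩ Set.Icc (0:ℝ) 1 = Set.Icc 0 (min 1 ((t - a) / b)) := by
    ext u
    simp only [Set.mem_inter_iff, Set.mem_setOf_eq, Set.mem_Icc, le_min_iff]
    constructor
    · rintro ⟨h1, h2, h3⟩
      exact ⟨h2, h3, by rw [le_div_iff₀ hb']; linarith⟩
    · rintro ⟨h1, h2, h3⟩
      rw [le_div_iff₀ hb'] at h3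
      exact ⟨by linarith, h1, h2⟩
  rw [Measure.restrict_apply hmeas, hset, Real.volume_Icc, ENNReal.toReal_ofReal', sub_zero]
  have hc : b * ((t - a) / b) = t - a := by field_simp
  rcases le_total ((t - a) / b) 0 with h | h
  · have hta : t - a ≤ 0 := by nlinarith
    rw [min_eq_right (le_trans h zero_le_one), max_eq_right h,
      min_eq_left (by linarith), min_eq_left (by linarith)]
    ring
  · rcases le_total ((t - a) / b) 1 with h1 | h1
    · have hta : 0 ≤ t - a := by nlinarith
      have htab : t - a ≤ b := by nlinarith
      rw [min_eq_right h1, max_eq_left h,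
        min_eq_left (by linarith : t ≤ a + b), min_eq_right (by linarith : a ≤ t)]
      exact hc
    · have htab : b ≤ t - a := by nlinarith
      rw [min_eq_left h1, max_eq_left zero_le_one,
        min_eq_right (by linarith : a + b ≤ t), min_eq_right (by linarith : a ≤ t)]
      ring

lemma meas_fin_comp {Ω : Type*} [MeasurableSpace Ω] {d K : ℕ}
    (f : (Fin d → ℝ) → Fin K → ℝ) (hf : ∀ y, Measurable fun x => f x y)
    (X : Ω → Fin d → ℝ) (Y : Ω → Fin K) (hX : Measurable X) (hY : Measurable Y) :
    Measurable fun ω => f (X ω) (Y ω) := by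
  have h : (fun ω => f (X ω) (Y ω))
      = fun ω => ∑ y : Fin K, if Y ω = y then f (X ω) y else 0 := by
    ext ω; rw [Finset.sum_ite_eq]; simp
  rw [h]
  exact Finset.measurable_sum _ fun y _ =>
    Measurable.ite (hY (measurableSet_singleton y)) ((hf y).comp hX) measurable_const

lemma probMassAbove_measurable {d K : ℕ} (π : (Fin d → ℝ) → Fin K → ℝ)
    (hπmeas : ∀ y : Fin K, Measurable fun x => π x y) (y : Fin K) :
    Measurable fun x => probMassAbove π x y := by
  unfold probMassAbove
  exact Finset.measurable_sum _ fun y' _ =>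
    Measurable.ite (measurableSet_lt (hπmeas y) (hπmeas y')) (hπmeas y') measurable_const

lemma probMassAbove_nonneg {d K : ℕ} (π : (Fin d → ℝ) → Fin K → ℝ)
    (hnonneg : ∀ x y, 0 ≤ π x y) (x : Fin d → ℝ) (y : Fin K) :
    0 ≤ probMassAbove π x y := by
  unfold probMassAbove
  exact Finset.sum_nonneg fun y' _ => by split <;> simp [hnonneg]

lemma pointwise_sum {d K : ℕ} (π : (Fin d → ℝ) → Fin K → ℝ)
    (hnonneg : ∀ x y, 0 ≤ π x y) (hsum : ∀ x, ∑ y : Fin K, π x y = 1)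
    (hdistinct : ∀ x, Function.Injective (π x)) (x : Fin d → ℝ) (t : ℝ)
    (ht : t ∈ Set.Icc (0:ℝ) 1) :
    ∑ y : Fin K, π x y *
      ((volume.restrict (Set.Icc (0:ℝ) 1)) {u | probMassAbove π x y + π x y * u ≤ t}).toReal
      = t := by
  have h1 : ∀ y : Fin K, π x y *
      ((volume.restrict (Set.Icc (0:ℝ) 1)) {u | probMassAbove π x y + π x y * u ≤ t}).toReal
      = min t (probMassAbove π x y + π x y) - min t (probMassAbove π x y) := fun y =>
    uniform_term _ _ _ (hnonneg x y)
  rw [Finset.sum_congr rfl fun y _ => h1 y]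
  have := aux_sum (π x) t ht.1 Finset.univ (fun y _ => hnonneg x y)
    ((hdistinct x).injOn)
  simp only [probMassAbove]
  rw [this, hsum x, min_eq_left ht.2]

lemma key_integral {Ω : Type*} [MeasurableSpace Ω] (μ : Measure Ω) [IsProbabilityMeasure μ]
    {d K : ℕ} (π : (Fin d → ℝ) → Fin K → ℝ)
    (hnonneg : ∀ x y, 0 ≤ π x y) (hsum : ∀ x, ∑ y : Fin K, π x y = 1)
    (hdistinct : ∀ x, Function.Injective (π x))
    (X : Ω → (Fin d → ℝ)) (Y : Ω → Fin K) (U : Ω → ℝ)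
    (hX : Measurable X) (hY : Measurable Y) (hU : Measurable U)
    (hπmeas : ∀ y : Fin K, Measurable fun x => π x y)
    (htrue : ∀ y : Fin K,
      μ[(Set.indicator {ω | Y ω = y} fun _ => (1 : ℝ)) |
        MeasurableSpace.comap X inferInstance] =ᵐ[μ] fun ω => π (X ω) y)
    (hunif : μ.map U = volume.restrict (Set.Icc (0 : ℝ) 1))
    (hUindep : IndepFun (fun ω => (X ω, Y ω)) U μ)
    (t : ℝ) (ht : t ∈ Set.Icc (0:ℝ) 1) (A : Set (Fin d → ℝ)) (hA : MeasurableSet A) :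
    ∫ ω in X ⁻¹' A,
      Set.indicator {ω | probMassAbove π (X ω) (Y ω) + π (X ω) (Y ω) * U ω ≤ t}
        (fun _ => (1:ℝ)) ω ∂μ
      = t * (μ (X ⁻¹' A)).toReal := by
  set unif : Measure ℝ := volume.restrict (Set.Icc (0:ℝ) 1) with hunifdef
  haveI hunifprob : IsProbabilityMeasure unif := by
    constructor
    rw [hunifdef, Measure.restrict_apply MeasurableSet.univ, Set.univ_inter, Real.volume_Icc]
    norm_num
  have hm := hX.comap_le
  haveI : SigmaFinite (μ.trim hm) := inferInstance
  -- measurable pieces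
  have hρmeas' := probMassAbove_measurable π hπmeas
  -- the set S₀ on the product space
  set S₀ : Set (((Fin d → ℝ) × Fin K) × ℝ) :=
    {p | probMassAbove π p.1.1 p.1.2 + π p.1.1 p.1.2 * p.2 ≤ t} with hS₀def
  have hgmeas : Measurable fun p : ((Fin d → ℝ) × Fin K) × ℝ =>
      probMassAbove π p.1.1 p.1.2 + π p.1.1 p.1.2 * p.2 := by
    have h1 : Measurable fun p : ((Fin d → ℝ) × Fin K) × ℝ => probMassAbove π p.1.1 p.1.2 :=
      meas_fin_comp _ hρmeas' _ _ (measurable_fst.fst) (measurable_fst.snd)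
    have h2 : Measurable fun p : ((Fin d → ℝ) × Fin K) × ℝ => π p.1.1 p.1.2 :=
      meas_fin_comp _ hπmeas _ _ (measurable_fst.fst) (measurable_fst.snd)
    exact h1.add (h2.mul measurable_snd)
  have hS₀ : MeasurableSet S₀ := measurableSet_le hgmeas measurable_const
  set S : Set (((Fin d → ℝ) × Fin K) × ℝ) := ((fun p => p.1.1) ⁻¹' A) ∩ S₀ with hSdef
  have hS : MeasurableSet S := ((measurable_fst.fst) hA).inter hS₀
  -- G
  set Gt : (Fin d → ℝ) × Fin K → ℝ := fun w => (unif (Prod.mk w ⁻¹' S₀)).toReal with hGtdef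
  have hGtmeas : Measurable Gt :=
    (measurable_measure_prodMk_left hS₀).ennreal_toReal
  have hGtslice : ∀ w : (Fin d → ℝ) × Fin K,
      Gt w = (unif {u | probMassAbove π w.1 w.2 + π w.1 w.2 * u ≤ t}).toReal := fun w => rfl
  have hGt01 : ∀ w, 0 ≤ Gt w ∧ Gt w ≤ 1 := by
    intro w
    refine ⟨ENNReal.toReal_nonneg, ?_⟩
    have := prob_le_one (μ := unif) (s := Prod.mk w ⁻¹' S₀)
    calc (unif (Prod.mk w ⁻¹' S₀)).toReal ≤ (1 : ℝ≥0∞).toReal :=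
          ENNReal.toReal_mono ENNReal.one_ne_top this
      _ = 1 := by simp
  -- Step A+B+C: rewrite as integral over the product measure
  have hpair : Measurable fun ω => ((X ω, Y ω), U ω) := (hX.prodMk hY).prodMk hU
  set ν : Measure ((Fin d → ℝ) × Fin K) := μ.map (fun ω => (X ω, Y ω)) with hνdef
  haveI : IsProbabilityMeasure ν := Measure.isProbabilityMeasure_map (hX.prodMk hY).aemeasurable
  have hmap : μ.map (fun ω => ((X ω, Y ω), U ω)) = ν.prod unif := by
    rw [hνdef, ← hunif]
    exact (indepFun_iff_map_prod_eq_prod_map_map (hX.prodMk hY).aemeasurable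
      hU.aemeasurable).mp hUindep
  have stepA : ∫ ω in X ⁻¹' A,
      Set.indicator {ω | probMassAbove π (X ω) (Y ω) + π (X ω) (Y ω) * U ω ≤ t}
        (fun _ => (1:ℝ)) ω ∂μ
      = ∫ ω, Set.indicator S (fun _ => (1:ℝ)) ((X ω, Y ω), U ω) ∂μ := by
    rw [← integral_indicator (hX hA)]
    congr 1
    ext ω
    by_cases h1 : X ω ∈ A <;>
      by_cases h2 : probMassAbove π (X ω) (Y ω) + π (X ω) (Y ω) * U ω ≤ t <;>
      simp [Set.indicator_apply, h1, h2, hSdef, hS₀def]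
  have stepB : ∫ ω, Set.indicator S (fun _ => (1:ℝ)) ((X ω, Y ω), U ω) ∂μ
      = ∫ p, Set.indicator S (fun _ => (1:ℝ)) p ∂(ν.prod unif) := by
    rw [← hmap]
    exact (integral_map hpair.aemeasurable
      ((measurable_const.indicator hS).aestronglyMeasurable)).symm
  have hSint : Integrable (Set.indicator S fun _ => (1:ℝ)) (ν.prod unif) :=
    (integrable_const (1:ℝ)).indicator hS
  have stepD : ∫ p, Set.indicator S (fun _ => (1:ℝ)) p ∂(ν.prod unif)
      = ∫ w, Set.indicator ((fun w : (Fin d → ℝ) × Fin K => w.1) ⁻¹' A) Gt w ∂ν := by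
    rw [integral_prod _ hSint]
    refine integral_congr_ae (Filter.Eventually.of_forall fun w => ?_)
    dsimp only
    by_cases hw : w.1 ∈ A
    · have heq : (fun u => Set.indicator S (fun _ => (1:ℝ)) (w, u))
          = Set.indicator {u | probMassAbove π w.1 w.2 + π w.1 w.2 * u ≤ t} (fun _ => (1:ℝ)) := by
        ext u
        by_cases h2 : probMassAbove π w.1 w.2 + π w.1 w.2 * u ≤ t <;>
          simp [Set.indicator_apply, hw, h2, hSdef, hS₀def]
      have hsl : MeasurableSet {u : ℝ | probMassAbove π w.1 w.2 + π w.1 w.2 * u ≤ t} :=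
        measurableSet_le (measurable_const.add (measurable_id.const_mul _)) measurable_const
      have hw' : w ∈ (fun w : (Fin d → ℝ) × Fin K => w.1) ⁻¹' A := hw
      rw [heq, integral_indicator_const (1:ℝ) hsl, Set.indicator_of_mem hw', hGtslice w,
        smul_eq_mul, mul_one]
      rfl
    · have heq : (fun u => Set.indicator S (fun _ => (1:ℝ)) (w, u)) = fun _ => (0:ℝ) := by
        ext u; simp [Set.indicator_apply, hSdef, hw]
      have hw' : w ∉ (fun w : (Fin d → ℝ) × Fin K => w.1) ⁻¹' A := hw
      rw [heq, Set.indicator_of_notMem hw', integral_zero]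
  have stepE : ∫ w, Set.indicator ((fun w : (Fin d → ℝ) × Fin K => w.1) ⁻¹' A) Gt w ∂ν
      = ∫ ω, Set.indicator ((fun w : (Fin d → ℝ) × Fin K => w.1) ⁻¹' A) Gt (X ω, Y ω) ∂μ := by
    rw [hνdef]
    exact integral_map (hX.prodMk hY).aemeasurable
      ((hGtmeas.indicator (measurable_fst hA)).aestronglyMeasurable)
  -- decomposition over the label y
  have hπle1 : ∀ x y, π x y ≤ 1 := by
    intro x y
    have h := Finset.single_le_sum (f := π x) (fun y' _ => hnonneg x y') (Finset.mem_univ y)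
    rwa [hsum x] at h
  set φ : Fin K → Ω → ℝ := fun y ω => Set.indicator (X ⁻¹' A) (fun ω' => Gt (X ω', y)) ω
    with hφdef
  set indF : Fin K → Ω → ℝ := fun y => Set.indicator {ω | Y ω = y} (fun _ => (1:ℝ))
    with hindFdef
  have hYsets : ∀ y : Fin K, MeasurableSet {ω | Y ω = y} := fun y =>
    hY (measurableSet_singleton y)
  have hφmeas : ∀ y, Measurable (φ y) := fun y =>
    ((hGtmeas.comp (hX.prodMk measurable_const))).indicator (hX hA)
  have hindmeas : ∀ y, Measurable (indF y) := fun y =>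
    measurable_const.indicator (hYsets y)
  have hφ01 : ∀ y ω, 0 ≤ φ y ω ∧ φ y ω ≤ 1 := by
    intro y ω
    simp only [hφdef]
    by_cases h : ω ∈ X ⁻¹' A
    · rw [Set.indicator_of_mem h]; exact hGt01 _
    · rw [Set.indicator_of_notMem h]; norm_num
  have hind01 : ∀ y ω, 0 ≤ indF y ω ∧ indF y ω ≤ 1 := by
    intro y ω
    simp only [hindFdef]
    by_cases h : ω ∈ {ω | Y ω = y}
    · rw [Set.indicator_of_mem h]; norm_num
    · rw [Set.indicator_of_notMem h]; norm_num
  have hbdd_int : ∀ f : Ω → ℝ, Measurable f → (∀ ω, |f ω| ≤ 1) → Integrable f μ := by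
    intro f hf hb
    exact (integrable_const (1:ℝ)).mono' hf.aestronglyMeasurable
      (Filter.Eventually.of_forall fun ω => by simpa [Real.norm_eq_abs] using hb ω)
  have habs : ∀ a b : ℝ, 0 ≤ a → a ≤ 1 → 0 ≤ b → b ≤ 1 → |a * b| ≤ 1 := by
    intro a b h1 h2 h3 h4
    rw [abs_of_nonneg (mul_nonneg h1 h3)]
    nlinarith
  have stepF : ∀ ω, Set.indicator ((fun w : (Fin d → ℝ) × Fin K => w.1) ⁻¹' A) Gt (X ω, Y ω)
      = ∑ y : Fin K, φ y ω * indF y ω := by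
    intro ω
    have h1 : ∀ y : Fin K, φ y ω * indF y ω = if Y ω = y then φ y ω else 0 := by
      intro y
      simp only [hφdef, hindFdef]
      by_cases h : Y ω = y
      · rw [if_pos h, Set.indicator_of_mem (show ω ∈ {ω | Y ω = y} from h), mul_one]
      · rw [if_neg h, Set.indicator_of_notMem (show ω ∉ {ω | Y ω = y} from h), mul_zero]
    rw [Finset.sum_congr rfl fun y _ => h1 y, Finset.sum_ite_eq, if_pos (Finset.mem_univ _)]
    simp only [hφdef]
    by_cases h : ω ∈ X ⁻¹' A
    · rw [Set.indicator_of_mem h, Set.indicator_of_mem (show (X ω, Y ω) ∈ (fun w : (Fin d → ℝ) × Fin K => w.1) ⁻¹' A from h)]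
    · rw [Set.indicator_of_notMem h, Set.indicator_of_notMem (show (X ω, Y ω) ∉ (fun w : (Fin d → ℝ) × Fin K => w.1) ⁻¹' A from h)]
  have stepG : ∫ ω, Set.indicator ((fun w : (Fin d → ℝ) × Fin K => w.1) ⁻¹' A) Gt (X ω, Y ω) ∂μ
      = ∑ y : Fin K, ∫ ω, φ y ω * indF y ω ∂μ := by
    rw [integral_congr_ae (Filter.Eventually.of_forall stepF)]
    exact integral_finset_sum _ fun y _ => hbdd_int _ ((hφmeas y).mul (hindmeas y))
      (fun ω => habs _ _ (hφ01 y ω).1 (hφ01 y ω).2 (hind01 y ω).1 (hind01 y ω).2)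
  have hφm : ∀ y, StronglyMeasurable[MeasurableSpace.comap X inferInstance] (φ y) := by
    intro y
    refine Measurable.stronglyMeasurable ?_
    refine Measurable.indicator ?_ ⟨A, hA, rfl⟩
    exact hGtmeas.comp ((comap_measurable X).prodMk measurable_const)
  have stepH : ∀ y : Fin K, ∫ ω, φ y ω * indF y ω ∂μ = ∫ ω, φ y ω * π (X ω) y ∂μ := by
    intro y
    have hint2 : Integrable (indF y) μ := hbdd_int _ (hindmeas y)
      (fun ω => abs_le.2 ⟨by linarith [(hind01 y ω).1], (hind01 y ω).2⟩)
    have hint1 : Integrable (φ y * indF y) μ := hbdd_int _ ((hφmeas y).mul (hindmeas y))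
      (fun ω => habs _ _ (hφ01 y ω).1 (hφ01 y ω).2 (hind01 y ω).1 (hind01 y ω).2)
    have hmul := condExp_mul_of_stronglyMeasurable_left (m := MeasurableSpace.comap X inferInstance)
      (hφm y) hint1 hint2
    have h2 : μ[φ y * indF y | MeasurableSpace.comap X inferInstance]
        =ᵐ[μ] fun ω => φ y ω * π (X ω) y := by
      refine hmul.trans ?_
      filter_upwards [htrue y] with ω hω
      rw [Pi.mul_apply, hω]
    calc ∫ ω, φ y ω * indF y ω ∂μ
        = ∫ ω, (μ[φ y * indF y | MeasurableSpace.comap X inferInstance]) ω ∂μ :=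
          (integral_condExp hm).symm
      _ = ∫ ω, φ y ω * π (X ω) y ∂μ := integral_congr_ae h2
  have stepI : ∑ y : Fin K, ∫ ω, φ y ω * π (X ω) y ∂μ = t * (μ (X ⁻¹' A)).toReal := by
    rw [← integral_finset_sum (f := fun (y : Fin K) (ω : Ω) => φ y ω * π (X ω) y) _
      (fun y _ => hbdd_int _ ((hφmeas y).mul ((hπmeas y).comp hX))
      (fun ω => habs _ _ (hφ01 y ω).1 (hφ01 y ω).2 (hnonneg (X ω) y) (hπle1 (X ω) y)))]
    have hptw : ∀ ω, ∑ y : Fin K, φ y ω * π (X ω) y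
        = Set.indicator (X ⁻¹' A) (fun _ => t) ω := by
      intro ω
      simp only [hφdef]
      by_cases h : ω ∈ X ⁻¹' A
      · rw [Set.indicator_of_mem h]
        calc ∑ y : Fin K, Set.indicator (X ⁻¹' A) (fun ω' => Gt (X ω', y)) ω * π (X ω) y
            = ∑ y : Fin K, π (X ω) y *
              ((volume.restrict (Set.Icc (0:ℝ) 1))
                {u | probMassAbove π (X ω) y + π (X ω) y * u ≤ t}).toReal := by
              refine Finset.sum_congr rfl fun y _ => ?_
              rw [Set.indicator_of_mem h, hGtslice, mul_comm]
          _ = t := pointwise_sum π hnonneg hsum hdistinct (X ω) t ht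
      · rw [Set.indicator_of_notMem h]
        refine Finset.sum_eq_zero fun y _ => ?_
        rw [Set.indicator_of_notMem h, zero_mul]
    rw [integral_congr_ae (Filter.Eventually.of_forall hptw),
      integral_indicator_const t (hX hA), smul_eq_mul, mul_comm]
    rfl
  rw [stepA, stepB, stepD, stepE, stepG, Finset.sum_congr rfl fun y _ => stepH y, stepI]

/-- **Randomized probability integral transform for the APS score.**
If `π̂_x` gives the true conditional class probabilities `P(Y = y | X = x)` (distinct for
each `x`), and `U` is uniform on `[0,1]` independent of `(X, Y)`, then
`V = ρ_X(Y) + π̂_X(Y)·U` is uniform on `[0,1]` conditionally on `X` (its conditional CDF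
given `X` is `t` for every `t ∈ [0,1]`), and hence unconditionally uniform on `[0,1]`. -/
theorem randomized_probability_integral_transform
    {Ω : Type*} [MeasurableSpace Ω] (μ : Measure Ω) [IsProbabilityMeasure μ]
    (d K : ℕ) (π : (Fin d → ℝ) → Fin K → ℝ)
    (hnonneg : ∀ x y, 0 ≤ π x y) (hsum : ∀ x, ∑ y : Fin K, π x y = 1)
    (hdistinct : ∀ x, Function.Injective (π x))
    (X : Ω → (Fin d → ℝ)) (Y : Ω → Fin K) (U : Ω → ℝ)
    (hX : Measurable X) (hY : Measurable Y) (hU : Measurable U)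
    (hπmeas : ∀ y : Fin K, Measurable fun x => π x y)
    -- π̂ is the true conditional probability: P(Y = y | X) = π̂_X(y) a.e., for every y
    (htrue : ∀ y : Fin K,
      μ[(Set.indicator {ω | Y ω = y} fun _ => (1 : ℝ)) |
        MeasurableSpace.comap X inferInstance] =ᵐ[μ] fun ω => π (X ω) y)
    -- U is uniform on [0,1] and independent of (X, Y)
    (hunif : μ.map U = volume.restrict (Set.Icc (0 : ℝ) 1))
    (hUindep : IndepFun (fun ω => (X ω, Y ω)) U μ) :
    (∀ t : ℝ, t ∈ Set.Icc (0 : ℝ) 1 →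
      μ[(Set.indicator {ω | probMassAbove π (X ω) (Y ω) + π (X ω) (Y ω) * U ω ≤ t}
          fun _ => (1 : ℝ)) |
        MeasurableSpace.comap X inferInstance] =ᵐ[μ] fun _ => t) ∧
    μ.map (fun ω => probMassAbove π (X ω) (Y ω) + π (X ω) (Y ω) * U ω) =
      volume.restrict (Set.Icc (0 : ℝ) 1) := by
  have hm := hX.comap_le
  haveI : SigmaFinite (μ.trim hm) := inferInstance
  have hρmeas' := probMassAbove_measurable π hπmeas
  have hVmeas : Measurable fun ω => probMassAbove π (X ω) (Y ω) + π (X ω) (Y ω) * U ω :=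
    ((meas_fin_comp _ hρmeas' X Y hX hY).add
      ((meas_fin_comp _ hπmeas X Y hX hY).mul hU))
  have hVt : ∀ t : ℝ,
      MeasurableSet {ω | probMassAbove π (X ω) (Y ω) + π (X ω) (Y ω) * U ω ≤ t} := fun t =>
    measurableSet_le hVmeas measurable_const
  have part1 : ∀ t : ℝ, t ∈ Set.Icc (0 : ℝ) 1 →
      μ[(Set.indicator {ω | probMassAbove π (X ω) (Y ω) + π (X ω) (Y ω) * U ω ≤ t}
          fun _ => (1 : ℝ)) |
        MeasurableSpace.comap X inferInstance] =ᵐ[μ] fun _ => t := by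
    intro t ht
    refine (ae_eq_condExp_of_forall_setIntegral_eq hm
      ((integrable_const (1:ℝ)).indicator (hVt t))
      (fun s _ _ => integrableOn_const (measure_lt_top μ s).ne)
      (fun s hs _ => ?_)
      aestronglyMeasurable_const).symm
    obtain ⟨A, hA, rfl⟩ := hs
    rw [setIntegral_const,
      key_integral μ π hnonneg hsum hdistinct X Y U hX hY hU hπmeas htrue hunif hUindep
        t ht A hA, smul_eq_mul, mul_comm]
    rfl
  refine ⟨part1, ?_⟩
  haveI hprob : IsProbabilityMeasure
      (μ.map fun ω => probMassAbove π (X ω) (Y ω) + π (X ω) (Y ω) * U ω) :=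
    Measure.isProbabilityMeasure_map hVmeas.aemeasurable
  have key : ∀ t : ℝ, t ∈ Set.Icc (0:ℝ) 1 →
      μ {ω | probMassAbove π (X ω) (Y ω) + π (X ω) (Y ω) * U ω ≤ t} = ENNReal.ofReal t := by
    intro t ht
    have h2 := integral_condExp (μ := μ)
      (f := Set.indicator {ω | probMassAbove π (X ω) (Y ω) + π (X ω) (Y ω) * U ω ≤ t}
        fun _ => (1 : ℝ)) hm
    have h3 : ∫ ω, (μ[(Set.indicator
        {ω | probMassAbove π (X ω) (Y ω) + π (X ω) (Y ω) * U ω ≤ t} fun _ => (1 : ℝ)) |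
        MeasurableSpace.comap X inferInstance]) ω ∂μ = t := by
      rw [integral_congr_ae (part1 t ht)]
      simp
    have h4 : ∫ ω, Set.indicator
        {ω | probMassAbove π (X ω) (Y ω) + π (X ω) (Y ω) * U ω ≤ t} (fun _ => (1:ℝ)) ω ∂μ
        = (μ {ω | probMassAbove π (X ω) (Y ω) + π (X ω) (Y ω) * U ω ≤ t}).toReal := by
      rw [integral_indicator_const _ (hVt t), smul_eq_mul, mul_one]
      rfl
    have h5 := h4.symm.trans (h2.symm.trans h3)
    conv_rhs => rw [← h5]
    exact (ENNReal.ofReal_toReal (measure_ne_top μ _)).symm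
  refine Measure.ext_of_Iic _ _ (fun a => ?_)
  rw [Measure.map_apply hVmeas measurableSet_Iic,
    Measure.restrict_apply measurableSet_Iic,
    show Set.Iic a ∩ Set.Icc (0:ℝ) 1 = Set.Icc 0 (min a 1) by
      ext u
      simp only [Set.mem_inter_iff, Set.mem_Iic, Set.mem_Icc, le_min_iff]
      tauto,
    Real.volume_Icc, sub_zero]
  have hpre : (fun ω => probMassAbove π (X ω) (Y ω) + π (X ω) (Y ω) * U ω) ⁻¹' Set.Iic a
      = {ω | probMassAbove π (X ω) (Y ω) + π (X ω) (Y ω) * U ω ≤ a} := rfl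
  rw [hpre]
  rcases lt_or_ge a 0 with h | h
  · have hU0 : μ {ω | U ω < 0} = 0 := by
      have : {ω | U ω < 0} = U ⁻¹' Set.Iio 0 := rfl
      rw [this, ← Measure.map_apply hU measurableSet_Iio, hunif,
        Measure.restrict_apply measurableSet_Iio]
      have h0 : Set.Iio (0:ℝ) ∩ Set.Icc 0 1 = ∅ := by
        ext u
        simp only [Set.mem_inter_iff, Set.mem_Iio, Set.mem_Icc, Set.mem_empty_iff_false,
          iff_false, not_and]
        intro h1 h2
        linarith
      rw [h0, measure_empty]
    have hnull : μ {ω | probMassAbove π (X ω) (Y ω) + π (X ω) (Y ω) * U ω ≤ a} = 0 := by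
      refine measure_mono_null (fun ω hω => ?_) hU0
      simp only [Set.mem_setOf_eq] at hω ⊢
      by_contra hcon
      push_neg at hcon
      have h1 := probMassAbove_nonneg π hnonneg (X ω) (Y ω)
      have h2 := mul_nonneg (hnonneg (X ω) (Y ω)) hcon
      linarith
    rw [hnull, min_eq_left (by linarith : a ≤ 1)]
    symm
    rw [ENNReal.ofReal_eq_zero]
    linarith
  · rcases le_total a 1 with h1 | h1
    · rw [min_eq_left h1]
      exact key a ⟨h, h1⟩
    · rw [min_eq_right h1]
      have h2 := key 1 ⟨zero_le_one, le_refl 1⟩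
      have hmono : μ {ω | probMassAbove π (X ω) (Y ω) + π (X ω) (Y ω) * U ω ≤ 1}
          ≤ μ {ω | probMassAbove π (X ω) (Y ω) + π (X ω) (Y ω) * U ω ≤ a} :=
        measure_mono (fun ω hω => le_trans hω h1)
      rw [h2, ENNReal.ofReal_one] at hmono
      rw [ENNReal.ofReal_one]
      exact le_antisymm prob_le_one hmono
end

section
/- Under the oracle APS procedure with exact conditional probabilities, the prediction set C(x, u, τ) = {y : ρ_x(y) + π_x(y)·u ≤ τ} with τ = 1 − α satisfies exact conditional coverage: P(Y ∈ C(X, U, 1−α) | X = x) = 1 − α for every x, where U is uniform on [0,1] independent of (X, Y). -/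
open MeasureTheory ProbabilityTheory

lemma tile_sum {K : ℕ} (p : Fin K → ℝ) (h1 : ∑ y, p y = 1)
    (hinj : Function.Injective p) {τ : ℝ} (hτ0 : 0 ≤ τ) (hτ1 : τ ≤ 1) :
    ∑ y : Fin K, (min τ ((∑ y' : Fin K, if p y < p y' then p y' else 0) + p y)
      - min τ (∑ y' : Fin K, if p y < p y' then p y' else 0)) = τ := by
  set e := Tuple.sort p with he
  have hmono : StrictMono (p ∘ e) :=
    (Tuple.monotone_sort p).strictMono_of_injective (hinj.comp e.injective)
  set T : ℕ → ℝ := fun k => ∑ j : Fin K, if k ≤ (j : ℕ) then p (e j) else 0 with hT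
  have hT0 : T 0 = 1 := by
    simp only [hT, Nat.zero_le, if_true]
    rw [Equiv.sum_comp e p]; exact h1
  have hTK : T K = 0 := by
    simp only [hT]
    refine Finset.sum_eq_zero fun j _ => ?_
    have := j.isLt
    rw [if_neg (by omega)]
  have hρ : ∀ i : Fin K, (∑ y' : Fin K, if p (e i) < p y' then p y' else 0) = T ((i : ℕ) + 1) := by
    intro i
    rw [← Equiv.sum_comp e (fun y' => if p (e i) < p y' then p y' else 0)]
    simp only [hT]
    have hlt : ∀ i j : Fin K, p (e i) < p (e j) ↔ i < j := fun i j => hmono.lt_iff_lt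
    refine Finset.sum_congr rfl fun j _ => ?_
    congr 1
    simp only [eq_iff_iff, hlt i j, Fin.lt_def]
    omega
  have hstep : ∀ i : Fin K, T (i : ℕ) = T ((i : ℕ) + 1) + p (e i) := by
    intro i
    simp only [hT]
    have : ∀ j : Fin K, (if (i : ℕ) ≤ (j : ℕ) then p (e j) else 0)
        = (if (i : ℕ) + 1 ≤ (j : ℕ) then p (e j) else 0)
          + (if j = i then p (e j) else 0) := by
      intro j
      rcases eq_or_ne j i with rfl | hne
      · simp
      · have : (i : ℕ) + 1 ≤ (j : ℕ) ↔ (i : ℕ) ≤ (j : ℕ) := by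
          constructor
          · omega
          · intro h
            rcases Nat.lt_or_ge (i : ℕ) (j : ℕ) with h' | h'
            · omega
            · exfalso; exact hne (Fin.ext (by omega))
        simp [hne, this]
    rw [Finset.sum_congr rfl (fun j _ => this j), Finset.sum_add_distrib,
      Finset.sum_ite_eq' Finset.univ i (fun j => p (e j))]
    simp
  calc ∑ y : Fin K, (min τ ((∑ y' : Fin K, if p y < p y' then p y' else 0) + p y)
      - min τ (∑ y' : Fin K, if p y < p y' then p y' else 0))
      = ∑ i : Fin K, (min τ (T (i : ℕ)) - min τ (T ((i : ℕ) + 1))) := by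
        rw [← Equiv.sum_comp e (fun y => min τ ((∑ y' : Fin K, if p y < p y' then p y' else 0) + p y)
          - min τ (∑ y' : Fin K, if p y < p y' then p y' else 0))]
        refine Finset.sum_congr rfl fun i _ => ?_
        rw [hρ i, ← hstep i]
    _ = ∑ i ∈ Finset.range K, (min τ (T i) - min τ (T (i + 1))) :=
        Fin.sum_univ_eq_sum_range (fun k => min τ (T k) - min τ (T (k + 1))) K
    _ = min τ (T 0) - min τ (T K) := Finset.sum_range_sub' (fun k => min τ (T k)) K
    _ = τ := by rw [hT0, hTK, min_eq_left hτ1, min_eq_right hτ0]; ring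



lemma clamp_eq {p ρ τ : ℝ} (hp : 0 ≤ p) :
    max 0 (min p (τ - ρ)) = min τ (ρ + p) - min τ ρ := by
  rcases le_total τ ρ with h | h
  · have e1 : min τ (ρ + p) = τ := min_eq_left (by linarith)
    have e2 : min τ ρ = τ := min_eq_left h
    have e3 : min p (τ - ρ) ≤ 0 := le_trans (min_le_right _ _) (by linarith)
    rw [e1, e2, max_eq_left e3]; ring
  · rcases le_total τ (ρ + p) with h2 | h2
    · have e1 : min τ (ρ + p) = τ := min_eq_left h2
      have e2 : min τ ρ = ρ := min_eq_right h
      have e3 : min p (τ - ρ) = τ - ρ := min_eq_right (by linarith)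
      rw [e1, e2, e3, max_eq_right (by linarith)]
    · have e1 : min τ (ρ + p) = ρ + p := min_eq_right h2
      have e2 : min τ ρ = ρ := min_eq_right (by linarith)
      have e3 : min p (τ - ρ) = p := min_eq_left (by linarith)
      rw [e1, e2, e3, max_eq_right hp]; ring

/-- **The oracle APS procedure has exact conditional coverage.**
If `π_x(y) = P(Y = y | X = x)` are the true conditional probabilities (distinct for each
`x`) and `U` is uniform on `[0,1]` independent of `(X, Y)`, then the oracle prediction set
`C(x, u, 1-α) = {y : ρ_x(y) + π_x(y)·u ≤ 1-α}` satisfies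
`P(Y ∈ C(X, U, 1-α) | X = x) = 1 - α` for (almost) every `x`. -/
theorem oracle_aps_conditional_coverage
    {Ω : Type*} [MeasurableSpace Ω] (μ : Measure Ω) [IsProbabilityMeasure μ]
    (d K : ℕ) (α : ℝ) (hα : α ∈ Set.Ioo (0 : ℝ) 1)
    (π : (Fin d → ℝ) → Fin K → ℝ)
    (hnonneg : ∀ x y, 0 ≤ π x y) (hsum : ∀ x, ∑ y : Fin K, π x y = 1)
    (hdistinct : ∀ x, Function.Injective (π x))
    (X : Ω → (Fin d → ℝ)) (Y : Ω → Fin K) (U : Ω → ℝ)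
    (hX : Measurable X) (hY : Measurable Y) (hU : Measurable U)
    (hπmeas : ∀ y : Fin K, Measurable fun x => π x y)
    -- π is the true conditional probability: P(Y = y | X) = π_X(y) a.e., for every y
    (htrue : ∀ y : Fin K,
      μ[(Set.indicator {ω | Y ω = y} fun _ => (1 : ℝ)) |
        MeasurableSpace.comap X inferInstance] =ᵐ[μ] fun ω => π (X ω) y)
    -- U is uniform on [0,1] and independent of (X, Y)
    (hunif : μ.map U = volume.restrict (Set.Icc (0 : ℝ) 1))
    (hUindep : IndepFun (fun ω => (X ω, Y ω)) U μ) :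
    μ[(Set.indicator
        {ω | probMassAbove π (X ω) (Y ω) + π (X ω) (Y ω) * U ω ≤ 1 - α}
        fun _ => (1 : ℝ)) |
      MeasurableSpace.comap X inferInstance] =ᵐ[μ] fun _ => 1 - α := by
  classical
  obtain ⟨hα0, hα1⟩ := hα
  set τ : ℝ := 1 - α with hτdef
  have hτ0 : 0 ≤ τ := by simp only [hτdef]; linarith
  have hτ1 : τ ≤ 1 := by simp only [hτdef]; linarith
  have hm : MeasurableSpace.comap X (inferInstance : MeasurableSpace (Fin d → ℝ)) ≤ _ :=
    hX.comap_le
  haveI : SigmaFinite (μ.trim hm) := inferInstance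
  -- basic facts
  have hπle1 : ∀ x y, π x y ≤ 1 := fun x y =>
    (hsum x) ▸ Finset.single_le_sum (fun i _ => hnonneg x i) (Finset.mem_univ y)
  have hbddint : ∀ (f : Ω → ℝ), Measurable f → (∀ ω, ‖f ω‖ ≤ 1) → Integrable f μ :=
    fun f hf hb => by
      refine Integrable.mono' (g := fun _ => (1:ℝ)) (integrable_const 1)
        hf.aestronglyMeasurable (Filter.Eventually.of_forall ?_)
      simpa using hb
  have hρmeas : ∀ y : Fin K, Measurable fun x => probMassAbove π x y := by
    intro y
    unfold probMassAbove
    exact Finset.measurable_sum _ fun y' _ =>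
      Measurable.ite (measurableSet_lt (hπmeas y) (hπmeas y')) (hπmeas y') measurable_const
  -- measurability of the event
  have hmeas1 : Measurable fun ω => probMassAbove π (X ω) (Y ω) := by
    have h : (fun ω => probMassAbove π (X ω) (Y ω))
        = fun ω => ∑ y : Fin K, if Y ω = y then probMassAbove π (X ω) y else 0 := by
      ext ω
      rw [Finset.sum_ite_eq Finset.univ (Y ω) (fun y => probMassAbove π (X ω) y)]
      simp
    rw [h]
    exact Finset.measurable_sum _ fun y _ =>
      Measurable.ite (hY (measurableSet_singleton _))
        ((hρmeas y).comp hX) measurable_const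
  have hmeas2 : Measurable fun ω => π (X ω) (Y ω) := by
    have h : (fun ω => π (X ω) (Y ω))
        = fun ω => ∑ y : Fin K, if Y ω = y then π (X ω) y else 0 := by
      ext ω
      rw [Finset.sum_ite_eq Finset.univ (Y ω) (fun y => π (X ω) y)]
      simp
    rw [h]
    exact Finset.measurable_sum _ fun y _ =>
      Measurable.ite (hY (measurableSet_singleton _))
        ((hπmeas y).comp hX) measurable_const
  set E : Set Ω := {ω | probMassAbove π (X ω) (Y ω) + π (X ω) (Y ω) * U ω ≤ τ} with hEdef
  have hEmeas : MeasurableSet E :=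
    measurableSet_le (hmeas1.add (hmeas2.mul hU)) measurable_const
  have hfint : Integrable (E.indicator fun _ => (1 : ℝ)) μ :=
    (integrable_const 1).indicator hEmeas
  -- the measures
  set υ : Measure ℝ := volume.restrict (Set.Icc (0 : ℝ) 1) with hυdef
  haveI hυprob : IsProbabilityMeasure υ :=
    ⟨by rw [Measure.restrict_apply_univ, Real.volume_Icc]; norm_num⟩
  set ν : Measure ((Fin d → ℝ) × Fin K) := μ.map (fun ω => (X ω, Y ω)) with hνdef
  haveI hνprob : IsProbabilityMeasure ν :=
    Measure.isProbabilityMeasure_map (hX.prodMk hY).aemeasurable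
  -- the slice function c
  set c : Fin K → (Fin d → ℝ) → ℝ :=
    fun y x => (υ {u | probMassAbove π x y + π x y * u ≤ τ}).toReal with hcdef
  have hcmeas : ∀ y, Measurable (c y) := by
    intro y
    have hset : MeasurableSet {q : (Fin d → ℝ) × ℝ |
        probMassAbove π q.1 y + π q.1 y * q.2 ≤ τ} :=
      measurableSet_le (((hρmeas y).comp measurable_fst).add
        (((hπmeas y).comp measurable_fst).mul measurable_snd)) measurable_const
    exact (measurable_measure_prodMk_left hset).ennreal_toReal
  have hc01 : ∀ y x, 0 ≤ c y x ∧ c y x ≤ 1 := by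
    intro y x
    refine ⟨ENNReal.toReal_nonneg, ?_⟩
    have h1 : υ {u | probMassAbove π x y + π x y * u ≤ τ} ≤ 1 := prob_le_one
    calc (υ {u | probMassAbove π x y + π x y * u ≤ τ}).toReal
        ≤ (1 : ENNReal).toReal := ENNReal.toReal_mono ENNReal.one_ne_top h1
      _ = 1 := by simp
  -- key pointwise identity
  have hkey : ∀ y x, π x y * c y x
      = min τ (probMassAbove π x y + π x y) - min τ (probMassAbove π x y) := by
    intro y x
    rw [← clamp_eq (hnonneg x y)]
    rcases eq_or_lt_of_le (hnonneg x y) with hp0 | hp0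
    · rw [← hp0]
      have : min (0:ℝ) (τ - probMassAbove π x y) ≤ 0 := min_le_left _ _
      rw [zero_mul, max_eq_left this]
    · have hSset : {u | probMassAbove π x y + π x y * u ≤ τ}
          = Set.Iic ((τ - probMassAbove π x y) / π x y) := by
        ext u
        simp only [Set.mem_setOf_eq, Set.mem_Iic, le_div_iff₀ hp0]
        constructor <;> intro h <;> nlinarith
      have hvol : υ {u | probMassAbove π x y + π x y * u ≤ τ}
          = ENNReal.ofReal (min ((τ - probMassAbove π x y) / π x y) 1) := by
        rw [hSset, hυdef, Measure.restrict_apply measurableSet_Iic]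
        have hI : Set.Iic ((τ - probMassAbove π x y) / π x y) ∩ Set.Icc (0:ℝ) 1
            = Set.Icc 0 (min ((τ - probMassAbove π x y) / π x y) 1) := by
          ext u
          simp only [Set.mem_inter_iff, Set.mem_Iic, Set.mem_Icc, le_min_iff]
          tauto
        rw [hI, Real.volume_Icc, sub_zero]
      rw [hcdef]
      simp only
      rw [hvol, ENNReal.toReal_ofReal']
      rw [mul_max_of_nonneg _ _ hp0.le, mul_min_of_nonneg _ _ hp0.le, mul_zero, mul_one,
        mul_div_cancel₀ _ hp0.ne']
      rw [max_comm, min_comm]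
  -- tiling: ∑ y, π x y * c y x = τ
  have htile : ∀ x, ∑ y : Fin K, π x y * c y x = τ := by
    intro x
    calc ∑ y : Fin K, π x y * c y x
        = ∑ y : Fin K, (min τ (probMassAbove π x y + π x y)
            - min τ (probMassAbove π x y)) := Finset.sum_congr rfl fun y _ => hkey y x
      _ = τ := by
          unfold probMassAbove
          exact tile_sum (π x) (hsum x) (hdistinct x) hτ0 hτ1
  -- the product-space machinery
  set V : Ω → ((Fin d → ℝ) × Fin K) × ℝ := fun ω => ((X ω, Y ω), U ω) with hVdef
  have hVmeas : Measurable V := (hX.prodMk hY).prodMk hU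
  have hmapV : μ.map V = ν.prod υ := by
    rw [← hunif]
    exact (indepFun_iff_map_prod_eq_prod_map_map (hX.prodMk hY).aemeasurable
      hU.aemeasurable).mp hUindep
  -- conditional expectation characterization
  symm
  refine ae_eq_condExp_of_forall_setIntegral_eq hm hfint
    (fun s _ _ => (integrable_const τ).integrableOn) ?_
    stronglyMeasurable_const.aestronglyMeasurable
  intro s hs _
  obtain ⟨A, hA, rfl⟩ := hs
  have hXA : MeasurableSet (X ⁻¹' A) := hX hA
  -- the per-label product sets
  set S : Fin K → Set (((Fin d → ℝ) × Fin K) × ℝ) := fun y =>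
    {q | (q.1.1 ∈ A ∧ q.1.2 = y) ∧ probMassAbove π q.1.1 y + π q.1.1 y * q.2 ≤ τ} with hSdef
  have hSmeas : ∀ y, MeasurableSet (S y) := by
    intro y
    have h : S y = (((fun q => q.1.1) ⁻¹' A) ∩ ((fun q => q.1.2) ⁻¹' {y}))
        ∩ {q : ((Fin d → ℝ) × Fin K) × ℝ |
            probMassAbove π q.1.1 y + π q.1.1 y * q.2 ≤ τ} := by
      ext q
      simp only [hSdef, Set.mem_setOf_eq, Set.mem_inter_iff, Set.mem_preimage,
        Set.mem_singleton_iff]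
    rw [h]
    refine MeasurableSet.inter (MeasurableSet.inter ?_ ?_) ?_
    · exact measurable_fst.fst hA
    · exact measurable_fst.snd (measurableSet_singleton y)
    · exact measurableSet_le (((hρmeas y).comp measurable_fst.fst).add
        (((hπmeas y).comp measurable_fst.fst).mul measurable_snd)) measurable_const
  -- pointwise decomposition of the indicator
  have hdecomp : ∀ ω, (X ⁻¹' A ∩ E).indicator (fun _ => (1:ℝ)) ω
      = ∑ y : Fin K, (S y).indicator (fun _ => (1:ℝ)) (V ω) := by
    intro ω
    rw [Finset.sum_eq_single (Y ω)
      (fun y _ hy => Set.indicator_of_notMem (fun hc => hy hc.1.2.symm) _)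
      (fun h => absurd (Finset.mem_univ _) h)]
    by_cases hmem : ω ∈ X ⁻¹' A ∩ E
    · have hmem' : V ω ∈ S (Y ω) := ⟨⟨hmem.1, rfl⟩, hmem.2⟩
      rw [Set.indicator_of_mem hmem, Set.indicator_of_mem hmem']
    · have hmem' : V ω ∉ S (Y ω) := fun hc => hmem ⟨hc.1.1, hc.2⟩
      rw [Set.indicator_of_notMem hmem, Set.indicator_of_notMem hmem']
  -- integrability of the pieces
  have hΦint : ∀ y : Fin K, Integrable ((S y).indicator fun _ => (1:ℝ)) (ν.prod υ) :=
    fun y => (integrable_const 1).indicator (hSmeas y)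
  have hFyint : ∀ y : Fin K,
      Integrable (fun ω => (S y).indicator (fun _ => (1:ℝ)) (V ω)) μ := by
    intro y
    have h : (fun ω => (S y).indicator (fun _ => (1:ℝ)) (V ω))
        = (V ⁻¹' (S y)).indicator (fun _ => 1) := by
      ext ω
      rfl
    rw [h]
    exact (integrable_const 1).indicator (hVmeas (hSmeas y))
  -- the per-label integral computation
  have hper : ∀ y : Fin K, ∫ ω, (S y).indicator (fun _ => (1:ℝ)) (V ω) ∂μ
      = ∫ ω, A.indicator (c y) (X ω) * ({ω' | Y ω' = y}.indicator (fun _ => (1:ℝ)) ω) ∂μ := by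
    intro y
    have hΦmeas : StronglyMeasurable ((S y).indicator fun _ => (1:ℝ)) :=
      (measurable_const.indicator (hSmeas y)).stronglyMeasurable
    have hinnermeas : Measurable fun q : (Fin d → ℝ) × Fin K =>
        if q.1 ∈ A ∧ q.2 = y then c y q.1 else 0 := by
      have hcond : MeasurableSet {q : (Fin d → ℝ) × Fin K | q.1 ∈ A ∧ q.2 = y} := by
        have h : {q : (Fin d → ℝ) × Fin K | q.1 ∈ A ∧ q.2 = y}
            = (Prod.fst ⁻¹' A) ∩ (Prod.snd ⁻¹' {y}) := by
          ext q; simp [Set.mem_inter_iff]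
        rw [h]
        exact (measurable_fst hA).inter (measurable_snd (measurableSet_singleton y))
      exact Measurable.ite hcond ((hcmeas y).comp measurable_fst) measurable_const
    calc ∫ ω, (S y).indicator (fun _ => (1:ℝ)) (V ω) ∂μ
        = ∫ q, (S y).indicator (fun _ => (1:ℝ)) q ∂(μ.map V) :=
          (integral_map hVmeas.aemeasurable hΦmeas.aestronglyMeasurable).symm
      _ = ∫ q, (S y).indicator (fun _ => (1:ℝ)) q ∂(ν.prod υ) := by rw [hmapV]
      _ = ∫ q, (∫ u, (S y).indicator (fun _ => (1:ℝ)) (q, u) ∂υ) ∂ν :=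
          integral_prod _ (hΦint y)
      _ = ∫ q, (if q.1 ∈ A ∧ q.2 = y then c y q.1 else 0) ∂ν := by
          refine integral_congr_ae (Filter.Eventually.of_forall fun q => ?_)
          beta_reduce
          by_cases hq : q.1 ∈ A ∧ q.2 = y
          · have heq : ∀ u, (S y).indicator (fun _ => (1:ℝ)) (q, u)
                = {u' | probMassAbove π q.1 y + π q.1 y * u' ≤ τ}.indicator
                    (fun _ => (1:ℝ)) u := by
              intro u
              by_cases hu : probMassAbove π q.1 y + π q.1 y * u ≤ τ
              · simp [hSdef, Set.indicator_apply, Set.mem_setOf_eq, hu, hq.1, hq.2]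
              · simp [hSdef, Set.indicator_apply, Set.mem_setOf_eq, hu]
            rw [if_pos hq]
            simp_rw [heq]
            have hms : MeasurableSet {u' : ℝ |
                probMassAbove π q.1 y + π q.1 y * u' ≤ τ} :=
              measurableSet_le (measurable_const.add
                (measurable_const.mul measurable_id)) measurable_const
            rw [integral_indicator_const (1:ℝ) hms, smul_eq_mul, mul_one]
            rfl
          · rw [if_neg hq]
            have heq : ∀ u, (S y).indicator (fun _ => (1:ℝ)) (q, u) = 0 := by
              intro u
              refine Set.indicator_of_notMem ?_ _
              exact fun hc => hq hc.1
            simp only [heq, integral_zero]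
      _ = ∫ ω, (if X ω ∈ A ∧ Y ω = y then c y (X ω) else 0) ∂μ := by
          rw [hνdef]
          exact integral_map (hX.prodMk hY).aemeasurable
            hinnermeas.aestronglyMeasurable
      _ = ∫ ω, A.indicator (c y) (X ω)
            * ({ω' | Y ω' = y}.indicator (fun _ => (1:ℝ)) ω) ∂μ := by
          refine integral_congr_ae (Filter.Eventually.of_forall fun ω => ?_)
          by_cases h1 : X ω ∈ A <;> by_cases h2 : Y ω = y <;>
            simp [Set.indicator_apply, h1, h2]
  -- the conditional-probability step
  have hstep : ∀ y : Fin K,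
      ∫ ω, A.indicator (c y) (X ω) * ({ω' | Y ω' = y}.indicator (fun _ => (1:ℝ)) ω) ∂μ
      = ∫ ω, A.indicator (c y) (X ω) * π (X ω) y ∂μ := by
    intro y
    have hψmeas : Measurable (A.indicator (c y)) := (hcmeas y).indicator hA
    have hψbd : ∀ x, ‖A.indicator (c y) x‖ ≤ 1 := by
      intro x
      rw [Real.norm_eq_abs]
      by_cases h : x ∈ A
      · rw [Set.indicator_of_mem h, abs_of_nonneg (hc01 y x).1]
        exact (hc01 y x).2
      · rw [Set.indicator_of_notMem h]
        simp
    have hsm : StronglyMeasurable[MeasurableSpace.comap X inferInstance] fun ω => A.indicator (c y) (X ω) := by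
      refine Measurable.stronglyMeasurable ?_
      intro t ht
      exact ⟨A.indicator (c y) ⁻¹' t, hψmeas ht, rfl⟩
    have hf0meas : MeasurableSet {ω' | Y ω' = y} := hY (measurableSet_singleton y)
    have hf0int : Integrable ({ω' | Y ω' = y}.indicator fun _ => (1:ℝ)) μ :=
      (integrable_const 1).indicator hf0meas
    have hprodint : Integrable ((fun ω => A.indicator (c y) (X ω))
        * ({ω' | Y ω' = y}.indicator fun _ => (1:ℝ))) μ := by
      refine hbddint _ ((hψmeas.comp hX).mul
        (measurable_const.indicator hf0meas)) fun ω => ?_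
      simp only [Pi.mul_apply, norm_mul]
      calc ‖A.indicator (c y) (X ω)‖ * ‖{ω' | Y ω' = y}.indicator (fun _ => (1:ℝ)) ω‖
          ≤ 1 * 1 := by
            refine mul_le_mul (hψbd (X ω)) ?_ (norm_nonneg _) zero_le_one
            rw [Real.norm_eq_abs, Set.indicator_apply]
            split <;> simp
        _ = 1 := by norm_num
    have hpull := condExp_mul_of_stronglyMeasurable_left hsm hprodint hf0int
    calc ∫ ω, A.indicator (c y) (X ω) * ({ω' | Y ω' = y}.indicator (fun _ => (1:ℝ)) ω) ∂μ
        = ∫ ω, ((fun ω => A.indicator (c y) (X ω))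
            * ({ω' | Y ω' = y}.indicator fun _ => (1:ℝ))) ω ∂μ := rfl
      _ = ∫ ω, (μ[(fun ω => A.indicator (c y) (X ω))
            * ({ω' | Y ω' = y}.indicator fun _ => (1:ℝ)) | MeasurableSpace.comap X inferInstance]) ω ∂μ :=
          (integral_condExp hm).symm
      _ = ∫ ω, A.indicator (c y) (X ω) * π (X ω) y ∂μ := by
          refine integral_congr_ae ?_
          filter_upwards [hpull, htrue y] with ω h1 h2
          rw [h1, Pi.mul_apply, h2]
  -- last integrand integrable
  have hlastint : ∀ y : Fin K,
      Integrable (fun ω => A.indicator (c y) (X ω) * π (X ω) y) μ := by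
    intro y
    refine hbddint _ (((hcmeas y).indicator hA |>.comp hX).mul
      ((hπmeas y).comp hX)) fun ω => ?_
    rw [norm_mul]
    have h1 : ‖A.indicator (c y) (X ω)‖ ≤ 1 := by
      rw [Real.norm_eq_abs]
      by_cases h : X ω ∈ A
      · rw [Set.indicator_of_mem h, abs_of_nonneg (hc01 y (X ω)).1]
        exact (hc01 y (X ω)).2
      · rw [Set.indicator_of_notMem h]; simp
    have h2 : ‖π (X ω) y‖ ≤ 1 := by
      rw [Real.norm_eq_abs, abs_of_nonneg (hnonneg (X ω) y)]
      exact hπle1 (X ω) y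
    calc ‖A.indicator (c y) (X ω)‖ * ‖π (X ω) y‖ ≤ 1 * 1 :=
        mul_le_mul h1 h2 (norm_nonneg _) zero_le_one
      _ = 1 := by norm_num
  -- assemble
  calc ∫ _ω in X ⁻¹' A, τ ∂μ
      = (μ (X ⁻¹' A)).toReal • τ := setIntegral_const τ
    _ = ∫ ω, (X ⁻¹' A).indicator (fun _ => τ) ω ∂μ := (integral_indicator_const τ hXA).symm
    _ = ∫ ω, ∑ y : Fin K, A.indicator (c y) (X ω) * π (X ω) y ∂μ := by
        refine integral_congr_ae (Filter.Eventually.of_forall fun ω => ?_)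
        beta_reduce
        by_cases h : X ω ∈ A
        · rw [Set.indicator_of_mem (show ω ∈ X ⁻¹' A from h)]
          have : ∀ y : Fin K, A.indicator (c y) (X ω) * π (X ω) y
              = π (X ω) y * c y (X ω) := by
            intro y
            rw [Set.indicator_of_mem h, mul_comm]
          rw [Finset.sum_congr rfl fun y _ => this y, htile (X ω)]
        · rw [Set.indicator_of_notMem (show ω ∉ X ⁻¹' A from h)]
          refine (Finset.sum_eq_zero fun y _ => ?_).symm
          rw [Set.indicator_of_notMem h, zero_mul]
    _ = ∑ y : Fin K, ∫ ω, A.indicator (c y) (X ω) * π (X ω) y ∂μ :=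
        integral_finset_sum Finset.univ fun y _ => hlastint y
    _ = ∑ y : Fin K, ∫ ω, A.indicator (c y) (X ω)
          * ({ω' | Y ω' = y}.indicator (fun _ => (1:ℝ)) ω) ∂μ :=
        (Finset.sum_congr rfl fun y _ => (hstep y).symm)
    _ = ∑ y : Fin K, ∫ ω, (S y).indicator (fun _ => (1:ℝ)) (V ω) ∂μ :=
        (Finset.sum_congr rfl fun y _ => (hper y).symm)
    _ = ∫ ω, ∑ y : Fin K, (S y).indicator (fun _ => (1:ℝ)) (V ω) ∂μ :=
        (integral_finset_sum Finset.univ fun y _ => hFyint y).symm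
    _ = ∫ ω, (X ⁻¹' A ∩ E).indicator (fun _ => (1:ℝ)) ω ∂μ :=
        integral_congr_ae (Filter.Eventually.of_forall fun ω => (hdecomp ω).symm)
    _ = ∫ ω, (X ⁻¹' A).indicator (E.indicator fun _ => (1:ℝ)) ω ∂μ := by
        rw [Set.indicator_indicator]
    _ = ∫ ω in X ⁻¹' A, E.indicator (fun _ => (1:ℝ)) ω ∂μ := integral_indicator hXA
end
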